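/- If a graph on n = 3k vertices does not contain P4 (the path on four vertices) as a subgraph and has exactly n edges, then it is a vertex-disjoint union of triangles. -/

import Mathlib

/-- `G` contains the path on four vertices (with three edges) as a subgraph. -/
def HasP4 {V : Type*} (G : SimpleGraph V) : Prop :=
  ∃ a b c d : V, a ≠ b ∧ a ≠ c ∧ a ≠ d ∧ b ≠ c ∧ b ≠ d ∧ c ≠ d ∧
    G.Adj a b ∧ G.Adj b c ∧ G.Adj c d

/-- The vertex set of the connected component of `G` containing `v`. -/
def compSet {V : Type*} (G : SimpleGraph V) (v : V) : Set V :=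
  {w | G.Reachable v w}

/-- The set `S` (a connected component of `G`) induces a triangle in `G`. -/
def IsTriangleComponent {V : Type*} (G : SimpleGraph V) (S : Set V) : Prop :=
  ∃ a b c : V, S = {a, b, c} ∧ a ≠ b ∧ a ≠ c ∧ b ≠ c ∧
    G.Adj a b ∧ G.Adj a c ∧ G.Adj b c

section Aux

variable {V : Type*} {G : SimpleGraph V}

lemma p4_of (hG : ¬ HasP4 G) {a b c d : V} (hab : G.Adj a b) (hbc : G.Adj b c)
    (hcd : G.Adj c d) (hac : a ≠ c) (had : a ≠ d) (hbd : b ≠ d) : False :=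
  hG ⟨a, b, c, d, hab.ne, hac, had, hbc.ne, hbd, hcd.ne, hab, hbc, hcd⟩

/-- A neighbor of the apex of a triangle is one of the other two triangle vertices. -/
lemma nbr_of_apex (hG : ¬ HasP4 G) {a b w y : V} (haw : G.Adj a w) (hbw : G.Adj b w)
    (hab : G.Adj a b) (hy : G.Adj w y) : y = a ∨ y = b := by
  by_contra h
  push_neg at h
  exact p4_of hG hy.symm haw.symm hab h.1 h.2 hbw.ne'

lemma reach_sub {S : Set V} (hS : ∀ x ∈ S, ∀ y, G.Adj x y → y ∈ S) :
    ∀ {v w : V}, G.Reachable v w → v ∈ S → w ∈ S := by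
  intro v w h hv
  obtain ⟨p⟩ := h
  induction p with
  | nil => exact hv
  | cons h' q ih => exact ih (hS _ hv _ h')

/-- Every edge of a `P4`-free graph either lies in a triangle or has a pendant-like
endpoint all of whose neighbors lie in the edge. -/
lemma pendant_of_no_common (hG : ¬ HasP4 G) {e : Sym2 V} (he : e ∈ G.edgeSet)
    (h : ¬ ∃ c, ∀ x ∈ e, G.Adj x c) : ∃ x ∈ e, ∀ y, G.Adj x y → y ∈ e := by
  induction e with
  | _ a b =>
    rw [SimpleGraph.mem_edgeSet] at he
    by_contra hcon
    push_neg at hcon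
    obtain ⟨a', ha', ha'e⟩ := hcon a (Sym2.mem_mk_left a b)
    obtain ⟨b', hb', hb'e⟩ := hcon b (Sym2.mem_mk_right a b)
    have hne : a' ≠ b' := by
      rintro rfl
      exact h ⟨a', fun x hx => by
        rcases Sym2.mem_iff.mp hx with rfl | rfl
        · exact ha'
        · exact hb'⟩
    simp only [Sym2.mem_iff, not_or] at ha'e hb'e
    exact p4_of hG ha'.symm he hb' ha'e.2 hne (Ne.symm hb'e.1)

open Classical in
/-- The edge-to-vertex map: a triangle edge maps to the opposite vertex of its
triangle, otherwise to a pendant endpoint. -/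
noncomputable def edgeMap (G : SimpleGraph V) (v₀ : V) (e : Sym2 V) : V :=
  if h : ∃ c, ∀ x ∈ e, G.Adj x c then h.choose
  else if h2 : ∃ x ∈ e, ∀ y, G.Adj x y → y ∈ e then h2.choose
  else v₀

lemma edgeMap_spec (hG : ¬ HasP4 G) (v₀ : V) {e : Sym2 V} (he : e ∈ G.edgeSet) :
    (∀ x ∈ e, G.Adj x (edgeMap G v₀ e)) ∨
    (edgeMap G v₀ e ∈ e ∧ ∀ y, G.Adj (edgeMap G v₀ e) y → y ∈ e) := by
  unfold edgeMap
  split_ifs with h1 h2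
  · exact Or.inl h1.choose_spec
  · exact Or.inr h2.choose_spec
  · exact absurd (pendant_of_no_common hG he h1) h2

lemma sym2_cases (e : Sym2 V) : ∃ a b, e = s(a, b) := by
  induction e with
  | _ a b => exact ⟨a, b, rfl⟩

lemma edgeMap_inj (hG : ¬ HasP4 G) (v₀ : V) {e₁ e₂ : Sym2 V} (he₁ : e₁ ∈ G.edgeSet)
    (he₂ : e₂ ∈ G.edgeSet) (h : edgeMap G v₀ e₁ = edgeMap G v₀ e₂) : e₁ = e₂ := by
  rcases edgeMap_spec hG v₀ he₁ with s1 | s1 <;> rcases edgeMap_spec hG v₀ he₂ with s2 | s2 <;>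
    rw [← h] at s2
  · -- both triangle
    obtain ⟨a, b, rfl⟩ := sym2_cases e₁
    obtain ⟨c, d, rfl⟩ := sym2_cases e₂
    rw [SimpleGraph.mem_edgeSet] at he₁ he₂
    have haw := s1 a (Sym2.mem_mk_left a b)
    have hbw := s1 b (Sym2.mem_mk_right a b)
    have hcw := s2 c (Sym2.mem_mk_left c d)
    have hdw := s2 d (Sym2.mem_mk_right c d)
    have hc := nbr_of_apex hG haw hbw he₁ hcw.symm
    have hd := nbr_of_apex hG haw hbw he₁ hdw.symm
    rcases hc with rfl | rfl <;> rcases hd with rfl | rfl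
    · exact (G.loopless.irrefl _ he₂).elim
    · rfl
    · exact Sym2.eq_swap
    · exact (G.loopless.irrefl _ he₂).elim
  · -- triangle / pendant : impossible
    obtain ⟨a, b, rfl⟩ := sym2_cases e₁
    rw [SimpleGraph.mem_edgeSet] at he₁
    have haw := s1 a (Sym2.mem_mk_left a b)
    have hbw := s1 b (Sym2.mem_mk_right a b)
    have h1 : e₂ = s(edgeMap G v₀ s(a, b), a) :=
      Sym2.eq_of_ne_mem haw.ne' s2.1 (s2.2 a haw.symm)
        (Sym2.mem_mk_left _ _) (Sym2.mem_mk_right _ _)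
    have h2 : e₂ = s(edgeMap G v₀ s(a, b), b) :=
      Sym2.eq_of_ne_mem hbw.ne' s2.1 (s2.2 b hbw.symm)
        (Sym2.mem_mk_left _ _) (Sym2.mem_mk_right _ _)
    exact absurd (Sym2.congr_right.mp (h1.symm.trans h2)) he₁.ne
  · -- pendant / triangle : impossible
    obtain ⟨c, d, rfl⟩ := sym2_cases e₂
    rw [SimpleGraph.mem_edgeSet] at he₂
    have hcw := s2 c (Sym2.mem_mk_left c d)
    have hdw := s2 d (Sym2.mem_mk_right c d)
    have h1 : e₁ = s(edgeMap G v₀ e₁, c) :=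
      Sym2.eq_of_ne_mem hcw.ne' s1.1 (s1.2 c hcw.symm)
        (Sym2.mem_mk_left _ _) (Sym2.mem_mk_right _ _)
    have h2 : e₁ = s(edgeMap G v₀ e₁, d) :=
      Sym2.eq_of_ne_mem hdw.ne' s1.1 (s1.2 d hdw.symm)
        (Sym2.mem_mk_left _ _) (Sym2.mem_mk_right _ _)
    exact absurd (Sym2.congr_right.mp (h1.symm.trans h2)) he₂.ne
  · -- both pendant
    obtain ⟨a, b, rfl⟩ := sym2_cases e₁
    rw [SimpleGraph.mem_edgeSet] at he₁
    rcases Sym2.mem_iff.mp s1.1 with hw | hw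
    · rw [hw] at s2
      exact Sym2.eq_of_ne_mem he₁.ne (Sym2.mem_mk_left _ _) (Sym2.mem_mk_right _ _)
        s2.1 (s2.2 b he₁)
    · rw [hw] at s2
      exact Sym2.eq_of_ne_mem he₁.ne (Sym2.mem_mk_left _ _) (Sym2.mem_mk_right _ _)
        (s2.2 a he₁.symm) s2.1

/-- If the pendant endpoint `v` of an edge were hit by the edge map, we get a
contradiction (using surjectivity at the other endpoint `u`). -/
lemma pend_contra (hG : ¬ HasP4 G) (v₀ : V)
    (hsurj : ∀ w : V, ∃ e ∈ G.edgeSet, edgeMap G v₀ e = w) {v u : V} (hvu : G.Adj v u)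
    (hnb : ∀ y, G.Adj v y → y = u) (hev : edgeMap G v₀ s(v, u) = v) : False := by
  obtain ⟨e', he', heu⟩ := hsurj u
  rcases edgeMap_spec hG v₀ he' with t | t <;> rw [heu] at t
  · obtain ⟨c, d, rfl⟩ := sym2_cases e'
    rw [SimpleGraph.mem_edgeSet] at he'
    have tcu := t c (Sym2.mem_mk_left c d)
    have tdu := t d (Sym2.mem_mk_right c d)
    rcases nbr_of_apex hG tcu tdu he' hvu.symm with rfl | rfl
    · exact tdu.ne (hnb d he')
    · exact tcu.ne (hnb c he'.symm)
  · have hve' : v ∈ e' := t.2 v hvu.symm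
    have he'eq : e' = s(u, v) :=
      Sym2.eq_of_ne_mem hvu.ne' t.1 hve' (Sym2.mem_mk_left _ _) (Sym2.mem_mk_right _ _)
    rw [he'eq, Sym2.eq_swap] at heu
    exact hvu.ne (hev.symm.trans heu)

end Aux

/-- A `P4`-free graph on `n = 3k` vertices with exactly `n` edges is a
vertex-disjoint union of triangles: every connected component is a triangle. -/
theorem P4_free_extremal_is_triangle_union (n k : ℕ) (hk : n = 3 * k)
    (G : SimpleGraph (Fin n)) [Fintype G.edgeSet] (hG : ¬ HasP4 G)
    (hcard : G.edgeFinset.card = n) (v : Fin n) :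
    IsTriangleComponent G (compSet G v) := by
  classical
  have hinj : Set.InjOn (edgeMap G v) G.edgeFinset := fun e₁ h1 e₂ h2 h =>
    edgeMap_inj hG v (SimpleGraph.mem_edgeFinset.mp h1) (SimpleGraph.mem_edgeFinset.mp h2) h
  have himg : Finset.image (edgeMap G v) G.edgeFinset = Finset.univ := by
    apply Finset.eq_univ_of_card
    rw [Finset.card_image_of_injOn hinj, hcard, Fintype.card_fin]
  have hsurj : ∀ w : Fin n, ∃ e ∈ G.edgeSet, edgeMap G v e = w := by
    intro w
    have hw : w ∈ Finset.image (edgeMap G v) G.edgeFinset := himg ▸ Finset.mem_univ w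
    obtain ⟨e, he, hew⟩ := Finset.mem_image.mp hw
    exact ⟨e, SimpleGraph.mem_edgeFinset.mp he, hew⟩
  obtain ⟨e, he, hev⟩ := hsurj v
  rcases edgeMap_spec hG v he with s1 | s1 <;> rw [hev] at s1
  · -- triangle case
    obtain ⟨a, b, rfl⟩ := sym2_cases e
    rw [SimpleGraph.mem_edgeSet] at he
    have hav := s1 a (Sym2.mem_mk_left a b)
    have hbv := s1 b (Sym2.mem_mk_right a b)
    refine ⟨v, a, b, ?_, hav.ne', hbv.ne', he.ne, hav.symm, hbv.symm, he⟩
    have hS : ∀ x ∈ ({v, a, b} : Set (Fin n)), ∀ y, G.Adj x y → y ∈ ({v, a, b} : Set (Fin n)) := by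
      rintro x (rfl | rfl | rfl) y hy
      · rcases nbr_of_apex hG hav hbv he hy with rfl | rfl
        · exact Or.inr (Or.inl rfl)
        · exact Or.inr (Or.inr rfl)
      · rcases nbr_of_apex hG hav.symm he.symm hbv.symm hy with rfl | rfl
        · exact Or.inl rfl
        · exact Or.inr (Or.inr rfl)
      · rcases nbr_of_apex hG hbv.symm he hav.symm hy with rfl | rfl
        · exact Or.inl rfl
        · exact Or.inr (Or.inl rfl)
    apply Set.Subset.antisymm
    · intro w hw
      exact reach_sub hS hw (Or.inl rfl)
    · rintro w (rfl | rfl | rfl)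
      · exact SimpleGraph.Reachable.refl w
      · exact hav.symm.reachable
      · exact hbv.symm.reachable
  · -- pendant case: impossible
    exfalso
    obtain ⟨a, b, rfl⟩ := sym2_cases e
    rw [SimpleGraph.mem_edgeSet] at he
    rcases Sym2.mem_iff.mp s1.1 with hw | hw
    · subst hw
      refine pend_contra hG v hsurj he ?_ hev
      intro y hy
      rcases Sym2.mem_iff.mp (s1.2 y hy) with h | h
      · exact absurd h hy.ne'
      · exact h
    · subst hw
      have hev' : edgeMap G v s(v, a) = v := by rw [Sym2.eq_swap]; exact hev
      refine pend_contra hG v hsurj he.symm ?_ hev'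
      intro y hy
      rcases Sym2.mem_iff.mp (s1.2 y hy) with h | h
      · exact h
      · exact absurd h hy.ne'
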